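/- Let 𝒯 ⊆ ℝ be a finite set and let (T_t)_{t∈𝒯} be bounded linear operators on ℓ²(ℤⁿ) such that for some C₁ < ∞, some η > 0 and every r ∈ (2,3), ‖ ‖T_t f‖_{V^r_{t∈𝒯}} ‖_{ℓ²(ℤⁿ)} ≤ C₁ (r−2)^{−η} ‖f‖_{ℓ²(ℤⁿ)} for all f ∈ ℓ²(ℤⁿ). Then for every finite index set Ξ, every collection (f_β)_{β∈Ξ} ⊂ ℓ²(ℤⁿ), and every r ∈ (2, ∞), the vector-valued variational estimate holds: ‖ ‖((T_t f_β)(x))_{β∈Ξ}‖_{V^r_{t∈𝒯}(ℓ²(Ξ))} ‖_{ℓ²_x(ℤⁿ)} ≤ C₁ (r/(r−2))^η (Σ_{β∈Ξ} ‖f_β‖²_{ℓ²(ℤⁿ)})^{1/2}. -/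

import Mathlib

open MeasureTheory Complex
open scoped ENNReal NNReal

/-- The `ℓ²` norm of a complex-valued function, valued in `ℝ≥0∞`. -/
noncomputable def l2n {ι : Type*} (f : ι → ℂ) : ℝ≥0∞ :=
  (∑' i, (‖f i‖₊ : ℝ≥0∞) ^ 2) ^ (2⁻¹ : ℝ)

/-- The `ℓ²` norm of an `ℝ≥0∞`-valued function. -/
noncomputable def l2En {ι : Type*} (f : ι → ℝ≥0∞) : ℝ≥0∞ :=
  (∑' i, f i ^ 2) ^ (2⁻¹ : ℝ)

/-- The `r`-variation seminorm of `F : T → H`. -/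
noncomputable def eVar {T H : Type*} [LinearOrder T] [NormedAddCommGroup H]
    (r : ℝ) (F : T → H) : ℝ≥0∞ :=
  ⨆ (J : ℕ) (u : Fin (J + 1) → T) (_ : Monotone u),
    (∑ j : Fin J, (‖F (u j.succ) - F (u j.castSucc)‖₊ : ℝ≥0∞) ^ r) ^ r⁻¹

private lemma lp_mono {ι : Type*} (s : Finset ι) (f : ι → ℝ≥0∞) {p q : ℝ}
    (hp : 0 < p) (hpq : p ≤ q) :
    (∑ i ∈ s, f i ^ q) ^ q⁻¹ ≤ (∑ i ∈ s, f i ^ p) ^ p⁻¹ := by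
  have hq : 0 < q := hp.trans_le hpq
  set S := ∑ i ∈ s, f i ^ p with hS
  rcases eq_or_ne S ⊤ with h | hStop
  · rw [h, ENNReal.top_rpow_of_pos (by positivity)]; exact le_top
  have key : ∀ i ∈ s, f i ^ q ≤ f i ^ p * S ^ ((q - p) / p) := by
    intro i hi
    rcases eq_or_ne (f i) 0 with h0 | h0
    · simp [h0, ENNReal.zero_rpow_of_pos hq]
    have hfin : f i ≠ ⊤ := by
      intro htop
      apply hStop
      have h1 : f i ^ p = ⊤ := by rw [htop]; exact ENNReal.top_rpow_of_pos hp
      exact ENNReal.sum_eq_top.2 ⟨i, hi, h1⟩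
    have heq : f i ^ q = f i ^ p * f i ^ (q - p) := by
      rw [← ENNReal.rpow_add p (q - p) h0 hfin]; ring_nf
    rw [heq]
    gcongr
    have h1 : f i ^ p ≤ S :=
      Finset.single_le_sum (f := fun j => f j ^ p) (fun j _ => zero_le) hi
    calc f i ^ (q - p) = (f i ^ p) ^ ((q - p) / p) := by
          rw [← ENNReal.rpow_mul]; congr 1; field_simp
      _ ≤ S ^ ((q - p) / p) :=
          ENNReal.rpow_le_rpow h1 (div_nonneg (by linarith) hp.le)
  calc (∑ i ∈ s, f i ^ q) ^ q⁻¹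
      ≤ (∑ i ∈ s, f i ^ p * S ^ ((q - p) / p)) ^ q⁻¹ := by
        gcongr with i hi; exact key i hi
    _ = (S * S ^ ((q - p) / p)) ^ q⁻¹ := by rw [← Finset.sum_mul]
    _ = (S ^ (1 + (q - p) / p)) ^ q⁻¹ := by
        rw [ENNReal.rpow_add_of_nonneg 1 _ zero_le_one (div_nonneg (by linarith) hp.le),
          ENNReal.rpow_one]
    _ = S ^ p⁻¹ := by
        rw [← ENNReal.rpow_mul]; congr 1; field_simp; ring

private lemma minkowski_finset {ι β : Type*} (t : Finset ι) (s : Finset β)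
    (g : β → ι → ℝ≥0∞) {p : ℝ} (hp : 1 ≤ p) :
    (∑ i ∈ t, (∑ b ∈ s, g b i) ^ p) ^ p⁻¹ ≤ ∑ b ∈ s, (∑ i ∈ t, g b i ^ p) ^ p⁻¹ := by
  have hp0 : 0 < p := lt_of_lt_of_le one_pos hp
  induction s using Finset.cons_induction with
  | empty =>
    simp [ENNReal.zero_rpow_of_pos hp0, ENNReal.zero_rpow_of_pos (inv_pos.2 hp0)]
  | cons a s ha ih =>
    simp only [Finset.sum_cons]
    calc (∑ i ∈ t, (g a i + ∑ b ∈ s, g b i) ^ p) ^ p⁻¹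
        ≤ (∑ i ∈ t, g a i ^ p) ^ p⁻¹ + (∑ i ∈ t, (∑ b ∈ s, g b i) ^ p) ^ p⁻¹ := by
          simpa [one_div] using
            ENNReal.Lp_add_le t (fun i => g a i) (fun i => ∑ b ∈ s, g b i) hp
      _ ≤ _ := add_le_add le_rfl ih

private lemma coe_sq (x : ℝ≥0) : (x : ℝ≥0∞) ^ (2:ℝ) = ((x ^ 2 : ℝ≥0) : ℝ≥0∞) := by
  rw [← ENNReal.coe_rpow_of_nonneg x (by norm_num : (0:ℝ) ≤ 2)]
  congr 1
  rw [← NNReal.rpow_natCast x 2]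
  norm_num

private lemma hsq (y : ℝ≥0∞) : (y ^ (2⁻¹ : ℝ)) ^ (2 : ℕ) = y := by
  rw [← ENNReal.rpow_natCast (y ^ (2⁻¹:ℝ)) 2, ← ENNReal.rpow_mul]
  norm_num

private lemma evar_exp_mono {T' H : Type*} [LinearOrder T'] [NormedAddCommGroup H]
    {p r : ℝ} (hp : 0 < p) (hpr : p ≤ r) (F : T' → H) : eVar r F ≤ eVar p F := by
  refine iSup_le fun J => iSup_le fun u => iSup_le fun hu => ?_
  exact le_trans (lp_mono _ _ hp hpr)
    (le_iSup_of_le J (le_iSup_of_le u (le_iSup_of_le hu le_rfl)))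

private lemma evar_pi {Ξ : Type} [Fintype Ξ] {T' : Type*} [LinearOrder T'] {r : ℝ}
    (hr : 2 ≤ r) (G : Ξ → T' → ℂ) :
    eVar r (fun t => ((WithLp.equiv 2 (Ξ → ℂ)).symm (fun β => G β t) : EuclideanSpace ℂ Ξ))
      ≤ (∑ β, eVar r (G β) ^ (2 : ℝ)) ^ (2⁻¹ : ℝ) := by
  have hr0 : (0:ℝ) < r := by linarith
  have hp1 : (1:ℝ) ≤ r / 2 := by linarith
  refine iSup_le fun J => iSup_le fun u => iSup_le fun hu => ?_
  set b : Fin J → Ξ → ℝ≥0∞ := fun j β =>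
    (‖G β (u j.succ) - G β (u j.castSucc)‖₊ : ℝ≥0∞) with hb
  have hnorm : ∀ j : Fin J,
      ((‖((WithLp.equiv 2 (Ξ → ℂ)).symm (fun β => G β (u j.succ)) : EuclideanSpace ℂ Ξ)
          - ((WithLp.equiv 2 (Ξ → ℂ)).symm (fun β => G β (u j.castSucc)) : EuclideanSpace ℂ Ξ)‖₊
          : ℝ≥0∞) : ℝ≥0∞) ^ (2:ℝ) = ∑ β, b j β ^ (2:ℝ) := by
    intro j
    rw [WithLp.equiv_symm_apply, ← WithLp.toLp_sub, ← WithLp.equiv_symm_apply]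
    have h1 : ‖((WithLp.equiv 2 (Ξ → ℂ)).symm ((fun β => G β (u j.succ)) -
        (fun β => G β (u j.castSucc))) : EuclideanSpace ℂ Ξ)‖₊
        = NNReal.sqrt (∑ β, ‖G β (u j.succ) - G β (u j.castSucc)‖₊ ^ 2) := by
      rw [EuclideanSpace.nnnorm_eq]
      congr 1
    rw [h1, coe_sq, NNReal.sq_sqrt, ENNReal.coe_finset_sum]
    exact Finset.sum_congr rfl fun β _ => (coe_sq _).symm
  calc (∑ j : Fin J,
        ((‖((WithLp.equiv 2 (Ξ → ℂ)).symm (fun β => G β (u j.succ)) : EuclideanSpace ℂ Ξ)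
          - ((WithLp.equiv 2 (Ξ → ℂ)).symm (fun β => G β (u j.castSucc)) : EuclideanSpace ℂ Ξ)‖₊
          : ℝ≥0∞)) ^ r) ^ r⁻¹
      = (∑ j : Fin J, (∑ β, b j β ^ (2:ℝ)) ^ (r/2)) ^ ((r/2)⁻¹ * 2⁻¹) := by
        congr 1
        · refine Finset.sum_congr rfl fun j _ => ?_
          rw [← hnorm j, ← ENNReal.rpow_mul]
          congr 1
          ring
        · field_simp
    _ = ((∑ j : Fin J, (∑ β, b j β ^ (2:ℝ)) ^ (r/2)) ^ ((r/2)⁻¹)) ^ (2⁻¹ : ℝ) :=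
        ENNReal.rpow_mul _ _ _
    _ ≤ (∑ β, (∑ j : Fin J, (b j β ^ (2:ℝ)) ^ (r/2)) ^ ((r/2)⁻¹)) ^ (2⁻¹ : ℝ) :=
        ENNReal.rpow_le_rpow
          (minkowski_finset Finset.univ Finset.univ (fun β j => b j β ^ (2:ℝ)) hp1)
          (by norm_num)
    _ = (∑ β, ((∑ j : Fin J, b j β ^ r) ^ r⁻¹) ^ (2:ℝ)) ^ (2⁻¹ : ℝ) := by
        congr 1
        refine Finset.sum_congr rfl fun β _ => ?_
        rw [← ENNReal.rpow_mul]
        have h2 : (∀ j : Fin J, (b j β ^ (2:ℝ)) ^ (r/2) = b j β ^ r) := fun j => by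
          rw [← ENNReal.rpow_mul]; congr 1; ring
        simp_rw [h2]
        congr 1
        field_simp
    _ ≤ (∑ β, eVar r (G β) ^ (2:ℝ)) ^ (2⁻¹ : ℝ) := by
        refine ENNReal.rpow_le_rpow (Finset.sum_le_sum fun β _ => ?_) (by norm_num)
        refine ENNReal.rpow_le_rpow ?_ (by norm_num)
        exact le_iSup_of_le J (le_iSup_of_le u (le_iSup_of_le hu le_rfl))

private lemma l2En_mono {ι : Type*} {f g : ι → ℝ≥0∞} (h : ∀ i, f i ≤ g i) :
    l2En f ≤ l2En g := by
  refine ENNReal.rpow_le_rpow (ENNReal.tsum_le_tsum fun i => ?_) (by norm_num)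
  exact pow_le_pow_left' (h i) 2

/-- the scalar variational estimate upgrades to a vector-valued
(`ℓ²(Ξ)`-valued) variational estimate, for all `r ∈ (2,∞)`. -/
theorem stmt7 (n : ℕ) (hn : 1 ≤ n) (C₁ : ℝ≥0) (η : ℝ) (hη : 0 < η)
    (𝒯 : Finset ℝ) (T : ℝ → ((Fin n → ℤ) → ℂ) →ₗ[ℂ] ((Fin n → ℤ) → ℂ))
    (hTbdd : ∀ t ∈ 𝒯, ∃ M : ℝ≥0, ∀ f : (Fin n → ℤ) → ℂ,
      l2n (T t f) ≤ (M : ℝ≥0∞) * l2n f)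
    (hTvar : ∀ r : ℝ, 2 < r → r < 3 → ∀ f : (Fin n → ℤ) → ℂ,
      l2En (fun x => eVar r (fun t : ↥𝒯 => T t.1 f x))
        ≤ (C₁ : ℝ≥0∞) * ENNReal.ofReal ((r - 2) ^ (-η)) * l2n f) :
    ∀ (Ξ : Type) (_ : Fintype Ξ) (f : Ξ → (Fin n → ℤ) → ℂ),
    ∀ r : ℝ, 2 < r →
      l2En (fun x => eVar r (fun t : ↥𝒯 =>
          ((WithLp.equiv 2 (Ξ → ℂ)).symm (fun β => T t.1 (f β) x) : EuclideanSpace ℂ Ξ)))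
        ≤ (C₁ : ℝ≥0∞) * ENNReal.ofReal ((r / (r - 2)) ^ η) *
            (∑ β, l2n (f β) ^ 2) ^ (2⁻¹ : ℝ) := by
  intro Ξ _ f r hr
  have hr0 : (0:ℝ) < r := by linarith
  set ρ : ℝ := 3 - 2 / r with hρ
  have h2r : 2 / r < 1 := by rw [div_lt_one hr0]; linarith
  have h2r0 : 0 < 2 / r := by positivity
  have hρ2 : 2 < ρ := by rw [hρ]; linarith
  have hρ3 : ρ < 3 := by rw [hρ]; linarith
  have hρ0 : (0:ℝ) < ρ := by linarith
  have hrr : 2 / r * r = 2 := div_mul_cancel₀ 2 hr0.ne'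
  have hρr : ρ ≤ r := by
    rw [hρ]
    nlinarith [mul_pos (by linarith : (0:ℝ) < r - 1) (by linarith : (0:ℝ) < r - 2)]
  have hρ2' : ρ - 2 = (r - 2) / r := by
    rw [hρ]; field_simp; ring
  have hxpos : (0:ℝ) < (r - 2) / r := by
    apply div_pos <;> linarith
  have hconst : (ρ - 2 : ℝ) ^ (-η) = (r / (r - 2)) ^ η := by
    rw [hρ2', Real.rpow_neg hxpos.le, ← Real.inv_rpow hxpos.le, inv_div]
  set K : ℝ≥0∞ := (C₁ : ℝ≥0∞) * ENNReal.ofReal ((ρ - 2) ^ (-η)) with hK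
  set E : Ξ → (Fin n → ℤ) → ℝ≥0∞ :=
    fun β x => eVar ρ (fun t : ↥𝒯 => T t.1 (f β) x) with hE
  -- pointwise bound
  have step1 : ∀ x : Fin n → ℤ,
      eVar r (fun t : ↥𝒯 =>
          ((WithLp.equiv 2 (Ξ → ℂ)).symm (fun β => T t.1 (f β) x) : EuclideanSpace ℂ Ξ))
        ≤ (∑ β, E β x ^ (2:ℝ)) ^ (2⁻¹ : ℝ) := by
    intro x
    refine le_trans (evar_pi (T' := ↥𝒯) hr.le (fun β (t : ↥𝒯) => T t.1 (f β) x)) ?_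
    refine ENNReal.rpow_le_rpow (Finset.sum_le_sum fun β _ => ?_) (by norm_num)
    exact ENNReal.rpow_le_rpow (evar_exp_mono hρ0 hρr _) (by norm_num)
  have step2 : l2En (fun x => (∑ β, E β x ^ (2:ℝ)) ^ (2⁻¹ : ℝ))
      = (∑ β, l2En (E β) ^ (2:ℝ)) ^ (2⁻¹ : ℝ) := by
    rw [l2En]
    congr 1
    calc ∑' x, (((∑ β, E β x ^ (2:ℝ)) ^ (2⁻¹ : ℝ)) ^ (2:ℕ))
        = ∑' x, ∑ β, E β x ^ (2:ℝ) := by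
          exact tsum_congr fun x => hsq _
      _ = ∑ β, ∑' x, E β x ^ (2:ℝ) :=
          Summable.tsum_finsetSum fun β _ => ENNReal.summable
      _ = ∑ β, l2En (E β) ^ (2:ℝ) := by
          refine Finset.sum_congr rfl fun β _ => ?_
          rw [l2En, ← ENNReal.rpow_mul]
          norm_num
  have step3 : (∑ β, l2En (E β) ^ (2:ℝ)) ^ (2⁻¹ : ℝ)
      ≤ (∑ β, (K * l2n (f β)) ^ (2:ℝ)) ^ (2⁻¹ : ℝ) := by
    refine ENNReal.rpow_le_rpow (Finset.sum_le_sum fun β _ => ?_) (by norm_num)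
    exact ENNReal.rpow_le_rpow (hTvar ρ hρ2 hρ3 (f β)) (by norm_num)
  have step4 : (∑ β, (K * l2n (f β)) ^ (2:ℝ)) ^ (2⁻¹ : ℝ)
      = K * (∑ β, l2n (f β) ^ 2) ^ (2⁻¹ : ℝ) := by
    have h1 : ∀ β : Ξ, (K * l2n (f β)) ^ (2:ℝ) = K ^ (2:ℝ) * l2n (f β) ^ (2:ℝ) :=
      fun β => ENNReal.mul_rpow_of_nonneg _ _ (by norm_num)
    simp_rw [h1, ← Finset.mul_sum]
    rw [ENNReal.mul_rpow_of_nonneg _ _ (by norm_num : (0:ℝ) ≤ 2⁻¹), ← ENNReal.rpow_mul]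
    norm_num
  have hKfin : K = (C₁ : ℝ≥0∞) * ENNReal.ofReal ((r / (r - 2)) ^ η) := by
    rw [hK, hconst]
  calc l2En (fun x => eVar r (fun t : ↥𝒯 =>
          ((WithLp.equiv 2 (Ξ → ℂ)).symm (fun β => T t.1 (f β) x) : EuclideanSpace ℂ Ξ)))
      ≤ l2En (fun x => (∑ β, E β x ^ (2:ℝ)) ^ (2⁻¹ : ℝ)) := l2En_mono step1
    _ = (∑ β, l2En (E β) ^ (2:ℝ)) ^ (2⁻¹ : ℝ) := step2
    _ ≤ (∑ β, (K * l2n (f β)) ^ (2:ℝ)) ^ (2⁻¹ : ℝ) := step3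
    _ = K * (∑ β, l2n (f β) ^ 2) ^ (2⁻¹ : ℝ) := step4
    _ = _ := by rw [hKfin]
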